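/- Let n be a natural number and let f_0, …, f_n and h_0, …, h_{n+1} be real numbers satisfying the polynomial identity (1+x) · Σ_{k=0}^{n+1} h_k x^k = 1 + Σ_{k=0}^{n} f_k x^{k+1} ((1−x)/2)^{n−k} + h_{n+1} x^{n+2} in ℝ[x]. Then (1−x)^{n+1} + x · Σ_{k=0}^{n} f_k (1−x)^{n−k} B_k(x) = Σ_{k=0}^{n+1} h_k p^B_{n,k}(x) in ℝ[x]. -/

import Mathlib

open Polynomial PowerSeries

/-- The polynomials `p^B_{n,k}` defined recursively as in
Proposition (e): `p^B_{0,0} = 1`, `p^B_{0,1} = x`,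
`p^B_{n+1,0} = ∑_{i=0}^{n+1} p^B_{n,i}`,
`p^B_{n+1,k} = 2x ∑_{i=0}^{k-1} p^B_{n,i} + 2 ∑_{i=k}^{n+1} p^B_{n,i}` for `1 ≤ k ≤ n+1`, and
`p^B_{n+1,n+2} = x ∑_{i=0}^{n+1} p^B_{n,i}`. -/
noncomputable def pB : ℕ → ℕ → Polynomial ℝ
  | 0, 0 => 1
  | 0, 1 => Polynomial.X
  | 0, _ + 2 => 0
  | n + 1, 0 => ∑ i ∈ Finset.range (n + 2), pB n i
  | n + 1, k + 1 =>
      if k + 1 ≤ n + 1 then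
        2 * Polynomial.X * (∑ i ∈ Finset.range (k + 1), pB n i) +
          2 * ∑ i ∈ Finset.Icc (k + 1) (n + 1), pB n i
      else if k + 1 = n + 2 then
        Polynomial.X * ∑ i ∈ Finset.range (n + 2), pB n i
      else 0
  termination_by n _ => n

/-- The coefficient of `x^m` in `pB n k / (1-x)^(n+1)`. -/
noncomputable def cc (n k m : ℕ) : ℝ :=
  if k = 0 then (2*(m:ℝ)+1)^n
  else if k ≤ n then (4*(m:ℝ)) * (2*(m:ℝ)+1)^(n-k) * (2*(m:ℝ)-1)^(k-1)
  else if k = n+1 ∧ m ≠ 0 then (2*(m:ℝ)-1)^n else 0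

lemma cc_zero (n k : ℕ) : cc n k 0 = if k = 0 then 1 else 0 := by
  unfold cc
  split_ifs with h1 h2 h3 <;> simp_all

lemma cc_zero_left (n m : ℕ) : cc n 0 m = (2*(m:ℝ)+1)^n := by simp [cc]

lemma cc_mid (n k m : ℕ) (h1 : 1 ≤ k) (h2 : k ≤ n) :
    cc n k m = (4*(m:ℝ)) * (2*(m:ℝ)+1)^(n-k) * (2*(m:ℝ)-1)^(k-1) := by
  have : k ≠ 0 := by omega
  simp [cc, this, h2]

lemma cc_top (n m : ℕ) : cc n (n+1) (m+1) = (2*((m:ℝ)+1)-1)^n := by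
  have h1 : n + 1 ≠ 0 := by omega
  have h2 : ¬ (n + 1 ≤ n) := by omega
  simp [cc, h1, h2]

lemma cc_big (n k m : ℕ) (h : n + 2 ≤ k) : cc n k m = 0 := by
  have h1 : k ≠ 0 := by omega
  have h2 : ¬ (k ≤ n) := by omega
  have h3 : k ≠ n + 1 := by omega
  simp [cc, h1, h2, h3]

lemma coeSum (s : Finset ℕ) (p : ℕ → ℝ[X]) :
    ((∑ i ∈ s, p i : ℝ[X]) : ℝ⟦X⟧) = ∑ i ∈ s, (p i : ℝ⟦X⟧) := by
  simp only [← Polynomial.coeToPowerSeries.ringHom_apply, map_sum]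

lemma coeff_two_mul (f : ℝ⟦X⟧) (m : ℕ) : PowerSeries.coeff m (2 * f) = 2 * PowerSeries.coeff m f := by
  have h2 : (2 : ℝ⟦X⟧) * f = f + f := by ring
  rw [h2, map_add]; ring

lemma coe_two : ((2:ℝ[X]) : ℝ⟦X⟧) = 2 := by
  have : (2:ℝ[X]) = 1 + 1 := by norm_num
  rw [this, Polynomial.coe_add, Polynomial.coe_one]; norm_num

lemma sum_core (A B : ℝ) (hAB : A - B = 2) (n : ℕ) :
    A^n + (∑ i ∈ Finset.range n, (A+B) * A^(n-1-i) * B^i) + B^n = A^(n+1) - B^(n+1) := by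
  induction n with
  | zero => simp; linarith
  | succ n ih =>
    rw [Finset.sum_range_succ']
    have hre : ∀ i ∈ Finset.range n,
        (A+B) * A^(n+1-1-(i+1)) * B^(i+1) = B * ((A+B) * A^(n-1-i) * B^i) := by
      intro i _
      have he : n+1-1-(i+1) = n-1-i := by omega
      rw [he]; ring
    rw [Finset.sum_congr rfl hre, ← Finset.mul_sum]
    have he0 : n+1-1-0 = n := by omega
    rw [he0, pow_zero]
    linear_combination B * ih - A^(n+1) * hAB

lemma sum_c (n m : ℕ) :
    ∑ i ∈ Finset.range (n+2), cc n i (m+1) = (2*(m:ℝ)+3)^(n+1) - (2*(m:ℝ)+1)^(n+1) := by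
  rw [Finset.sum_range_succ, Finset.sum_range_succ']
  have h0 : cc n 0 (m+1) = (2*(m:ℝ)+3)^n := by
    rw [cc_zero_left]
    congr 1; push_cast; ring
  have htop : cc n (n+1) (m+1) = (2*(m:ℝ)+1)^n := by
    rw [cc_top]
    congr 1; push_cast; ring
  have hmid : ∀ i ∈ Finset.range n, cc n (i+1) (m+1) =
      ((2*(m:ℝ)+3) + (2*(m:ℝ)+1)) * (2*(m:ℝ)+3)^(n-1-i) * (2*(m:ℝ)+1)^i := by
    intro i hi
    rw [Finset.mem_range] at hi
    rw [cc_mid n (i+1) (m+1) (by omega) (by omega)]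
    have e1 : n - (i+1) = n-1-i := by omega
    have e2 : i + 1 - 1 = i := by omega
    rw [e1, e2]
    push_cast
    ring_nf
  rw [Finset.sum_congr rfl hmid, h0, htop]
  have := sum_core (2*(m:ℝ)+3) (2*(m:ℝ)+1) (by ring) n
  linarith

lemma LA (n : ℕ) : ((1 : ℝ⟦X⟧) - PowerSeries.X) * PowerSeries.mk (cc (n+1) 0) = ∑ i ∈ Finset.range (n+2), PowerSeries.mk (cc n i) := by
  ext m
  rw [sub_mul, one_mul, map_sub, map_sum]
  cases m with
  | zero =>
    simp only [coeff_zero_X_mul, coeff_mk, sub_zero, cc_zero]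
    simp
  | succ m =>
    rw [coeff_succ_X_mul]
    simp only [coeff_mk]
    have hl : cc (n+1) 0 (m+1) = (2*(m:ℝ)+3)^(n+1) := by
      rw [cc_zero_left]; congr 1; push_cast; ring
    have hr : cc (n+1) 0 m = (2*(m:ℝ)+1)^(n+1) := by rw [cc_zero_left]
    rw [hl, hr, ← sum_c n m]

lemma R1 (n m : ℕ) : cc (n+1) 1 m = 2 * cc (n+1) 0 m - 2 * cc n 0 m := by
  rw [cc_zero_left, cc_zero_left, cc_mid (n+1) 1 m le_rfl (by omega)]
  have e1 : n + 1 - 1 = n := by omega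
  rw [e1, Nat.sub_self, pow_zero, pow_succ]
  ring

lemma R2 (n m j : ℕ) (h1 : 1 ≤ j) (h2 : j ≤ n) :
    cc (n+1) (j+1) m = cc (n+1) j m - 2 * cc n j m := by
  rw [cc_mid (n+1) (j+1) m (by omega) (by omega), cc_mid (n+1) j m h1 (by omega),
    cc_mid n j m h1 h2]
  have e1 : n+1-(j+1) = n - j := by omega
  have e2 : j+1-1 = (j-1)+1 := by omega
  have e3 : n+1-j = (n-j)+1 := by omega
  rw [e1, e2, e3, pow_succ, pow_succ]
  ring

lemma R3 (n : ℕ) : (PowerSeries.X : ℝ⟦X⟧) * PowerSeries.mk (cc (n+1) 0) = PowerSeries.mk (cc (n+1) (n+2)) := by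
  ext m
  cases m with
  | zero =>
    rw [coeff_zero_X_mul, coeff_mk, cc_zero]
    simp
  | succ m =>
    rw [coeff_succ_X_mul, coeff_mk, coeff_mk, cc_zero_left]
    have h1 : n + 2 ≠ 0 := by omega
    have h2 : ¬ (n + 2 ≤ n + 1) := by omega
    have h3 : n + 2 = n + 1 + 1 ∧ m + 1 ≠ 0 := ⟨rfl, by omega⟩
    simp only [cc, if_neg h1, if_neg h2, if_pos h3]
    congr 1; push_cast; ring

lemma LB (n : ℕ) : ∀ k, k ≤ n → ((1 : ℝ⟦X⟧) - PowerSeries.X) * PowerSeries.mk (cc (n+1) (k+1)) =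
    2 * PowerSeries.X * (∑ i ∈ Finset.range (k+1), (PowerSeries.mk (cc n i) : ℝ⟦X⟧)) +
      2 * ∑ i ∈ Finset.Icc (k+1) (n+1), (PowerSeries.mk (cc n i) : ℝ⟦X⟧) := by
  intro k
  induction k with
  | zero =>
    intro _
    have hmk : (PowerSeries.mk (cc (n+1) 1) : ℝ⟦X⟧) = 2 * PowerSeries.mk (cc (n+1) 0) - 2 * PowerSeries.mk (cc n 0) := by
      ext m
      rw [map_sub, coeff_two_mul, coeff_two_mul]
      simp only [coeff_mk]
      exact R1 n m
    have hr : Finset.range (n+2) = insert 0 (Finset.Icc 1 (n+1)) := by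
      ext a; simp [Finset.mem_Icc, Finset.mem_range]; omega
    have hsum : (∑ i ∈ Finset.range (n+2), (PowerSeries.mk (cc n i) : ℝ⟦X⟧)) =
        PowerSeries.mk (cc n 0) + ∑ i ∈ Finset.Icc 1 (n+1), (PowerSeries.mk (cc n i) : ℝ⟦X⟧) := by
      rw [hr, Finset.sum_insert (by simp)]
    rw [hmk, Finset.sum_range_one]
    linear_combination (2 : ℝ⟦X⟧) * LA n + 2 * hsum
  | succ k ih =>
    intro hk
    have hmk : (PowerSeries.mk (cc (n+1) (k+2)) : ℝ⟦X⟧) = PowerSeries.mk (cc (n+1) (k+1)) - 2 * PowerSeries.mk (cc n (k+1)) := by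
      ext m
      rw [map_sub, coeff_two_mul]
      simp only [coeff_mk]
      exact R2 n m (k+1) (by omega) hk
    have hic : Finset.Icc (k+1) (n+1) = insert (k+1) (Finset.Icc (k+2) (n+1)) := by
      ext a; simp [Finset.mem_Icc, Finset.mem_insert]; omega
    have hsum : ∑ i ∈ Finset.Icc (k+1) (n+1), (PowerSeries.mk (cc n i) : ℝ⟦X⟧) =
        PowerSeries.mk (cc n (k+1)) + ∑ i ∈ Finset.Icc (k+2) (n+1), (PowerSeries.mk (cc n i) : ℝ⟦X⟧) := by
      rw [hic, Finset.sum_insert (by simp)]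
    have hr2 : ∑ i ∈ Finset.range (k+2), (PowerSeries.mk (cc n i) : ℝ⟦X⟧) =
        ∑ i ∈ Finset.range (k+1), (PowerSeries.mk (cc n i) : ℝ⟦X⟧) + PowerSeries.mk (cc n (k+1)) :=
      Finset.sum_range_succ _ _
    rw [hmk]
    linear_combination ih (by omega) + (2:ℝ⟦X⟧) * hsum - 2 * (PowerSeries.X : ℝ⟦X⟧) * hr2

lemma mk_zero_fun : (PowerSeries.mk (fun _ => (0:ℝ)) : ℝ⟦X⟧) = 0 := by
  ext m; simp

lemma pB_eq : ∀ n k, ((pB n k : ℝ[X]) : ℝ⟦X⟧) = ((1 : ℝ⟦X⟧) - PowerSeries.X)^(n+1) * PowerSeries.mk (cc n k) := by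
  intro n
  induction n with
  | zero =>
    intro k
    match k with
    | 0 =>
      rw [pB, pow_one]
      rw [Polynomial.coe_one]
      ext m
      rw [sub_mul, one_mul, map_sub]
      cases m with
      | zero => simp [coeff_zero_X_mul, coeff_mk, cc]
      | succ m => simp [coeff_succ_X_mul, coeff_mk, cc, PowerSeries.coeff_one]
    | 1 =>
      rw [pB, pow_one, Polynomial.coe_X]
      have hc : ∀ j : ℕ, cc 0 1 j = if j = 0 then 0 else 1 := by
        intro j
        cases j with
        | zero => simp [cc_zero]
        | succ j =>
          have h1 : (1:ℕ) ≠ 0 := by omega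
          have h2 : ¬ ((1:ℕ) ≤ 0) := by omega
          have h3 : (1:ℕ) = 0 + 1 ∧ j + 1 ≠ 0 := ⟨rfl, by omega⟩
          simp only [cc, if_neg h1, if_neg h2, if_pos h3]
          simp
      ext m
      rw [sub_mul, one_mul, map_sub]
      cases m with
      | zero => simp [coeff_zero_X_mul, coeff_mk, hc]
      | succ m =>
        rw [coeff_succ_X_mul]
        simp only [coeff_mk, hc, PowerSeries.coeff_X]
        cases m with
        | zero => norm_num
        | succ m => norm_num
    | (k+2) =>
      rw [pB, Polynomial.coe_zero]
      have : (PowerSeries.mk (cc 0 (k+2)) : ℝ⟦X⟧) = 0 := by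
        ext m'
        rw [coeff_mk, cc_big 0 (k+2) m' (by omega)]
        simp
      rw [this, mul_zero]
  | succ n ih =>
    intro k
    match k with
    | 0 =>
      rw [pB, coeSum]
      rw [Finset.sum_congr rfl (fun i _ => ih i), ← Finset.mul_sum, ← LA n]
      rw [pow_succ]
      ring
    | (k+1) =>
      by_cases hk : k + 1 ≤ n + 1
      · rw [pB, if_pos hk]
        rw [Polynomial.coe_add, Polynomial.coe_mul, Polynomial.coe_mul, Polynomial.coe_mul,
          coe_two, Polynomial.coe_X, coeSum, coeSum]
        rw [Finset.sum_congr rfl (fun i _ => ih i), Finset.sum_congr rfl (fun i _ => ih i)]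
        rw [← Finset.mul_sum, ← Finset.mul_sum]
        rw [pow_succ]
        have := LB n k (by omega)
        linear_combination (-(((1:ℝ⟦X⟧) - PowerSeries.X))^(n+1)) * this
      · by_cases hk2 : k + 1 = n + 2
        · rw [pB, if_neg hk, if_pos hk2, hk2]
          rw [Polynomial.coe_mul, Polynomial.coe_X, coeSum]
          rw [Finset.sum_congr rfl (fun i _ => ih i), ← Finset.mul_sum, ← LA n, ← R3 n]
          rw [pow_succ]
          ring
        · rw [pB, if_neg hk, if_neg hk2, Polynomial.coe_zero]
          have : (PowerSeries.mk (cc (n+1) (k+1)) : ℝ⟦X⟧) = 0 := by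
            ext m'
            rw [coeff_mk, cc_big (n+1) (k+1) m' (by omega)]
            simp
          rw [this, mul_zero]

lemma keyalg (n : ℕ) (f h : ℕ → ℝ) (A B : ℝ) (hA0 : A ≠ 0) (hB0 : B ≠ 0) (hAB : A - B = 2)
    (E0 : (1 + B/A) * ∑ k ∈ Finset.range (n+2), h k * (B/A)^k
      = 1 + ∑ k ∈ Finset.range (n+1), f k * (B/A)^(k+1) * (1/2 * (1 - B/A))^(n-k)
        + h (n+1) * (B/A)^(n+2))
    (h0 : h 0 = 1) :
    (∑ i ∈ Finset.range n, h (i+1) * ((A+B) * (A^(n-1-i) * B^i))) + h 0 * A^n + h (n+1) * B^n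
      = ∑ k ∈ Finset.range (n+1), f k * B^k := by
  have lhsE : A^(n+2) * ((1 + B/A) * ∑ k ∈ Finset.range (n+2), h k * (B/A)^k)
      = (A+B) * ∑ k ∈ Finset.range (n+2), h k * (B^k * A^(n+1-k)) := by
    have hfact : A^(n+2) * (1 + B/A) = (A+B) * A^(n+1) := by
      field_simp; ring
    have hterm : ∀ k ∈ Finset.range (n+2), A^(n+1) * (h k * (B/A)^k) = h k * (B^k * A^(n+1-k)) := by
      intro k hk
      rw [Finset.mem_range] at hk
      have hsplit : A^(n+1) = A^k * A^(n+1-k) := by rw [← pow_add]; congr 1; omega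
      rw [div_pow, hsplit]
      field_simp
    calc A^(n+2) * ((1 + B/A) * ∑ k ∈ Finset.range (n+2), h k * (B/A)^k)
        = (A^(n+2) * (1 + B/A)) * ∑ k ∈ Finset.range (n+2), h k * (B/A)^k := by ring
      _ = ((A+B) * A^(n+1)) * ∑ k ∈ Finset.range (n+2), h k * (B/A)^k := by rw [hfact]
      _ = (A+B) * ∑ k ∈ Finset.range (n+2), A^(n+1) * (h k * (B/A)^k) := by
          rw [mul_assoc, Finset.mul_sum]
      _ = (A+B) * ∑ k ∈ Finset.range (n+2), h k * (B^k * A^(n+1-k)) := by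
          rw [Finset.sum_congr rfl hterm]
  have hhalf : (1/2 * (1 - B/A)) = 1/A := by
    have h2A : 1 - B/A = 2/A := by
      rw [eq_div_iff hA0, sub_mul, div_mul_cancel₀ _ hA0]
      linarith
    rw [h2A]; ring
  have rhsE : A^(n+2) * (1 + (∑ k ∈ Finset.range (n+1), f k * (B/A)^(k+1) * (1/2 * (1 - B/A))^(n-k))
        + h (n+1) * (B/A)^(n+2))
      = A^(n+2) + (∑ k ∈ Finset.range (n+1), f k * B^k) * (A*B) + h (n+1) * B^(n+2) := by
    have hterm : ∀ k ∈ Finset.range (n+1),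
        A^(n+2) * (f k * (B/A)^(k+1) * (1/2 * (1 - B/A))^(n-k)) = f k * B^k * (A*B) := by
      intro k hk
      rw [Finset.mem_range] at hk
      rw [hhalf]
      have hsplit : A^(n+2) = A^(k+1) * A^(n-k) * A := by
        rw [← pow_add, ← pow_succ]; congr 1; omega
      rw [div_pow, div_pow, one_pow, hsplit]
      field_simp
      ring
    have hlast : A^(n+2) * (h (n+1) * (B/A)^(n+2)) = h (n+1) * B^(n+2) := by
      rw [div_pow]; field_simp
    calc A^(n+2) * (1 + (∑ k ∈ Finset.range (n+1), f k * (B/A)^(k+1) * (1/2 * (1 - B/A))^(n-k))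
          + h (n+1) * (B/A)^(n+2))
        = A^(n+2) + (∑ k ∈ Finset.range (n+1), A^(n+2) * (f k * (B/A)^(k+1) * (1/2 * (1 - B/A))^(n-k)))
          + A^(n+2) * (h (n+1) * (B/A)^(n+2)) := by
          rw [mul_add, mul_add, mul_one, Finset.mul_sum]
      _ = A^(n+2) + (∑ k ∈ Finset.range (n+1), f k * B^k * (A*B)) + h (n+1) * B^(n+2) := by
          rw [Finset.sum_congr rfl hterm, hlast]
      _ = A^(n+2) + (∑ k ∈ Finset.range (n+1), f k * B^k) * (A*B) + h (n+1) * B^(n+2) := by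
          rw [Finset.sum_mul]
  have E2 : (A+B) * ∑ k ∈ Finset.range (n+2), h k * (B^k * A^(n+1-k))
      = A^(n+2) + (∑ k ∈ Finset.range (n+1), f k * B^k) * (A*B) + h (n+1) * B^(n+2) := by
    rw [← lhsE, ← rhsE, E0]
  rw [Finset.sum_range_succ, Finset.sum_range_succ'] at E2
  have e2mid : ∀ i ∈ Finset.range n, h (i+1) * (B^(i+1) * A^(n+1-(i+1)))
      = (A*B) * (h (i+1) * (A^(n-1-i) * B^i)) := by
    intro i hi
    rw [Finset.mem_range] at hi
    have he : n+1-(i+1) = (n-1-i)+1 := by omega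
    rw [he, pow_succ, pow_succ]; ring
  rw [Finset.sum_congr rfl e2mid, ← Finset.mul_sum] at E2
  simp only [pow_zero, one_mul, Nat.sub_zero, Nat.sub_self, mul_one] at E2
  have gmid : ∀ i ∈ Finset.range n, h (i+1) * ((A+B) * (A^(n-1-i) * B^i))
      = (A+B) * (h (i+1) * (A^(n-1-i) * B^i)) := by
    intro i _; ring
  rw [Finset.sum_congr rfl gmid, ← Finset.mul_sum]
  apply mul_left_cancel₀ (show A*B ≠ 0 from mul_ne_zero hA0 hB0)
  linear_combination E2 - A^(n+2) * h0

lemma key (n : ℕ) (f h : ℕ → ℝ)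
    (hdef : (1 + Polynomial.X) * ∑ k ∈ Finset.range (n + 2), Polynomial.C (h k) * Polynomial.X ^ k =
      1 + (∑ k ∈ Finset.range (n + 1), Polynomial.C (f k) * Polynomial.X ^ (k + 1) *
            (Polynomial.C (1 / 2 : ℝ) * (1 - Polynomial.X)) ^ (n - k)) +
        Polynomial.C (h (n + 1)) * Polynomial.X ^ (n + 2))
    (h0 : h 0 = 1) (m : ℕ) :
    ∑ k ∈ Finset.range (n+2), h k * cc n k (m+1) = ∑ k ∈ Finset.range (n+1), f k * (2*(m:ℝ)+1)^k := by
  have hA0 : (2*(m:ℝ)+3) ≠ 0 := by positivity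
  have hB0 : (2*(m:ℝ)+1) ≠ 0 := by positivity
  have E0 := congrArg (Polynomial.eval ((2*(m:ℝ)+1)/(2*(m:ℝ)+3))) hdef
  simp only [eval_mul, eval_add, eval_one, eval_X, eval_pow, eval_C, eval_sub,
    Polynomial.eval_finset_sum] at E0
  have halg := keyalg n f h (2*(m:ℝ)+3) (2*(m:ℝ)+1) hA0 hB0 (by ring) E0 h0
  rw [Finset.sum_range_succ, Finset.sum_range_succ']
  have gmid : ∀ i ∈ Finset.range n, h (i+1) * cc n (i+1) (m+1)
      = h (i+1) * (((2*(m:ℝ)+3)+(2*(m:ℝ)+1)) * ((2*(m:ℝ)+3)^(n-1-i) * (2*(m:ℝ)+1)^i)) := by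
    intro i hi
    rw [Finset.mem_range] at hi
    rw [cc_mid n (i+1) (m+1) (by omega) (by omega)]
    have e1 : n - (i+1) = n-1-i := by omega
    have e2 : i+1-1 = i := by omega
    rw [e1, e2]
    have hc1 : (2*((m+1:ℕ):ℝ)+1) = 2*(m:ℝ)+3 := by push_cast; ring
    have hc2 : (2*((m+1:ℕ):ℝ)-1) = 2*(m:ℝ)+1 := by push_cast; ring
    have hc3 : (4*((m+1:ℕ):ℝ)) = (2*(m:ℝ)+3)+(2*(m:ℝ)+1) := by push_cast; ring
    rw [hc1, hc2, hc3]; ring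
  have g0 : h 0 * cc n 0 (m+1) = h 0 * (2*(m:ℝ)+3)^n := by
    rw [cc_zero_left]
    have hc1 : (2*((m+1:ℕ):ℝ)+1) = 2*(m:ℝ)+3 := by push_cast; ring
    rw [hc1]
  have gtop : h (n+1) * cc n (n+1) (m+1) = h (n+1) * (2*(m:ℝ)+1)^n := by
    rw [cc_top]
    have hc2 : (2*((m:ℝ)+1)-1) = 2*(m:ℝ)+1 := by push_cast; ring
    rw [hc2]
  rw [Finset.sum_congr rfl gmid, g0, gtop]
  exact halg

/-- Theorem 3.2 (the `h`-vector transformation, algebraic form): if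
`(1+x) ∑_{k=0}^{n+1} h_k x^k = 1 + ∑_{k=0}^n f_k x^{k+1} ((1-x)/2)^{n-k} + h_{n+1} x^{n+2}`
in `ℝ[x]`, then
`(1-x)^{n+1} + x ∑_{k=0}^n f_k (1-x)^{n-k} B_k(x) = ∑_{k=0}^{n+1} h_k p^B_{n,k}(x)`,
where `B_k` is the type `B` Eulerian polynomial, determined by
`∑_{m ≥ 0} (2m+1)^k x^m = B_k(x)/(1-x)^{k+1}` in `ℝ⟦x⟧`. -/
theorem h_transformation (n : ℕ) (f h : ℕ → ℝ) (B : ℕ → Polynomial ℝ)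
    (hB : ∀ k, (B k : PowerSeries ℝ) =
      (1 - PowerSeries.X) ^ (k + 1) * PowerSeries.mk (fun m => ((2 * m + 1 : ℝ)) ^ k))
    (hdef : (1 + Polynomial.X) * ∑ k ∈ Finset.range (n + 2), Polynomial.C (h k) * Polynomial.X ^ k =
      1 + (∑ k ∈ Finset.range (n + 1), Polynomial.C (f k) * Polynomial.X ^ (k + 1) *
            (Polynomial.C (1 / 2 : ℝ) * (1 - Polynomial.X)) ^ (n - k)) +
        Polynomial.C (h (n + 1)) * Polynomial.X ^ (n + 2)) :
    (1 - Polynomial.X) ^ (n + 1) +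
        Polynomial.X * ∑ k ∈ Finset.range (n + 1),
          Polynomial.C (f k) * (1 - Polynomial.X) ^ (n - k) * B k =
      ∑ k ∈ Finset.range (n + 2), Polynomial.C (h k) * pB n k := by
  -- h 0 = 1
  have h0 : h 0 = 1 := by
    have h00 := congrArg (Polynomial.eval 0) hdef
    simp only [eval_mul, eval_add, eval_one, eval_X, eval_pow, eval_C, eval_sub,
      Polynomial.eval_finset_sum] at h00
    have hl : ∑ k ∈ Finset.range (n + 2), h k * (0:ℝ)^k = h 0 := by
      rw [Finset.sum_eq_single 0]
      · norm_num
      · intro b _ hb; rw [zero_pow hb]; ring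
      · intro hb; simp at hb
    have hr : ∀ k ∈ Finset.range (n+1),
        f k * (0:ℝ)^(k+1) * (1/2 * (1 - 0))^(n-k) = 0 := by
      intro k _
      rw [zero_pow (by omega : k + 1 ≠ 0)]
      ring
    rw [hl, Finset.sum_eq_zero hr] at h00
    have hz : (0:ℝ)^(n+2) = 0 := zero_pow (by omega)
    rw [hz] at h00
    linarith
  rw [← Polynomial.coe_inj]
  simp only [coeSum, Polynomial.coe_add, Polynomial.coe_mul, Polynomial.coe_pow,
    Polynomial.coe_sub, Polynomial.coe_one, Polynomial.coe_X, Polynomial.coe_C]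
  have hL : ∀ k ∈ Finset.range (n+1),
      (PowerSeries.C (f k)) * ((1:ℝ⟦X⟧) - PowerSeries.X)^(n-k) * (B k : ℝ⟦X⟧)
      = ((1:ℝ⟦X⟧) - PowerSeries.X)^(n+1) *
          (PowerSeries.C (f k) * PowerSeries.mk (fun m => ((2 * m + 1 : ℝ)) ^ k)) := by
    intro k hk
    rw [Finset.mem_range] at hk
    rw [hB k]
    have hpow : ((1:ℝ⟦X⟧) - PowerSeries.X)^(n-k) * ((1:ℝ⟦X⟧) - PowerSeries.X)^(k+1)
        = ((1:ℝ⟦X⟧) - PowerSeries.X)^(n+1) := by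
      rw [← pow_add]; congr 1; omega
    rw [← hpow]; ring
  have hR : ∀ k ∈ Finset.range (n+2),
      (PowerSeries.C (h k)) * ((pB n k : ℝ[X]) : ℝ⟦X⟧)
      = ((1:ℝ⟦X⟧) - PowerSeries.X)^(n+1) * (PowerSeries.C (h k) * PowerSeries.mk (cc n k)) := by
    intro k _
    rw [pB_eq n k]; ring
  rw [Finset.sum_congr rfl hL, Finset.sum_congr rfl hR, ← Finset.mul_sum, ← Finset.mul_sum]
  have hstep : ((1:ℝ⟦X⟧) - PowerSeries.X)^(n+1) + PowerSeries.X * (((1:ℝ⟦X⟧) - PowerSeries.X)^(n+1) *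
      ∑ k ∈ Finset.range (n+1), PowerSeries.C (f k) * PowerSeries.mk (fun m => ((2 * m + 1 : ℝ)) ^ k))
      = ((1:ℝ⟦X⟧) - PowerSeries.X)^(n+1) * (1 + PowerSeries.X *
      ∑ k ∈ Finset.range (n+1), PowerSeries.C (f k) * PowerSeries.mk (fun m => ((2 * m + 1 : ℝ)) ^ k)) := by
    ring
  rw [hstep]
  have hunit : ((1:ℝ⟦X⟧) - PowerSeries.X)^(n+1) ≠ 0 := by
    apply pow_ne_zero
    intro hcontra
    have := congrArg (PowerSeries.constantCoeff (R := ℝ)) hcontra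
    simp at this
  suffices hfin : (1 + PowerSeries.X *
      ∑ k ∈ Finset.range (n+1), PowerSeries.C (f k) * PowerSeries.mk (fun m => ((2 * m + 1 : ℝ)) ^ k))
      = ∑ k ∈ Finset.range (n+2), PowerSeries.C (h k) * PowerSeries.mk (cc n k) by
    rw [hfin]
  ext m
  rw [map_add, map_sum]
  cases m with
  | zero =>
    rw [coeff_zero_X_mul]
    simp only [PowerSeries.coeff_one, if_pos rfl, add_zero, PowerSeries.coeff_C_mul,
      coeff_mk, cc_zero]
    rw [Finset.sum_congr rfl (fun k _ => by rw [mul_ite, mul_one, mul_zero])]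
    rw [Finset.sum_ite_eq' (Finset.range (n+2)) 0 h]
    simp [h0]
  | succ m =>
    rw [coeff_succ_X_mul]
    simp only [PowerSeries.coeff_one, PowerSeries.coeff_C_mul, coeff_mk, map_sum]
    norm_num
    exact (key n f h hdef h0 m).symm
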